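/- In ℍ with metric ds² = 4dξ² + ξ⁶dθ², for any two points p = (θ₀,ξ₀), q = (θ₁,ξ₁) with θ₀ ≠ θ₁, the distance satisfies d(p,q) < 2ξ₀ + 2ξ₁, and if θ₀ = θ₁ then d(p,q) = 2|ξ₁ - ξ₀|. -/

import Mathlib

open Set Filter

/-- Length of a smooth path `x ↦ (θ(x), ξ(x))` in the upper half-plane model
`ℍ = {(θ,ξ) : ξ > 0}` with metric `ds² = 4dξ² + ξ⁶dθ²`. -/
noncomputable def Hlen (γ : ℝ → ℝ × ℝ) (a b : ℝ) : ℝ :=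
  ∫ x in a..b,
    Real.sqrt (4 * (deriv (fun t => (γ t).2) x) ^ 2 +
      ((γ x).2) ^ 6 * (deriv (fun t => (γ t).1) x) ^ 2)

/-- The length-metric distance in `ℍ`: infimum of lengths of `C¹` paths staying in `ξ > 0`. -/
noncomputable def Hdist (p q : ℝ × ℝ) : ℝ :=
  sInf { L : ℝ | ∃ γ : ℝ → ℝ × ℝ, ContDiff ℝ 1 γ ∧ γ 0 = p ∧ γ 1 = q ∧
    (∀ t ∈ Set.Icc (0:ℝ) 1, 0 < (γ t).2) ∧ L = Hlen γ 0 1 }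

lemma hlen_nonneg (γ : ℝ → ℝ × ℝ) : 0 ≤ Hlen γ 0 1 :=
  intervalIntegral.integral_nonneg zero_le_one (fun _ _ => Real.sqrt_nonneg _)

lemma hlen_lower (γ : ℝ → ℝ × ℝ) (hγ : ContDiff ℝ 1 γ) :
    2 * |(γ 1).2 - (γ 0).2| ≤ Hlen γ 0 1 := by
  set g : ℝ → ℝ := fun t => (γ t).2 with hgdef
  set f : ℝ → ℝ := fun t => (γ t).1 with hfdef
  have hg : ContDiff ℝ 1 g := (contDiff_snd : ContDiff ℝ 1 (Prod.snd : ℝ × ℝ → ℝ)).comp hγ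
  have hf : ContDiff ℝ 1 f := (contDiff_fst : ContDiff ℝ 1 (Prod.fst : ℝ × ℝ → ℝ)).comp hγ
  have hgd : Differentiable ℝ g := (contDiff_one_iff_deriv.mp hg).1
  have hgc : Continuous (deriv g) := (contDiff_one_iff_deriv.mp hg).2
  have hfc : Continuous (deriv f) := (contDiff_one_iff_deriv.mp hf).2
  have hcont : Continuous (fun x => Real.sqrt (4 * (deriv g x) ^ 2 + (g x) ^ 6 * (deriv f x) ^ 2)) := by
    apply Continuous.sqrt
    exact ((continuous_const.mul (hgc.pow 2)).add ((hg.continuous.pow 6).mul (hfc.pow 2)))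
  have hftc : ∫ x in (0:ℝ)..1, deriv g x = g 1 - g 0 := by
    apply intervalIntegral.integral_deriv_eq_sub (fun x _ => hgd x)
    exact hgc.intervalIntegrable 0 1
  have h1 : 2 * |g 1 - g 0| = |∫ x in (0:ℝ)..1, 2 * deriv g x| := by
    rw [intervalIntegral.integral_const_mul, hftc, abs_mul]
    norm_num
  rw [show (γ 1).2 - (γ 0).2 = g 1 - g 0 from rfl, h1]
  have h2 : |∫ x in (0:ℝ)..1, 2 * deriv g x| ≤ ∫ x in (0:ℝ)..1, |2 * deriv g x| :=
    intervalIntegral.abs_integral_le_integral_abs zero_le_one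
  refine h2.trans ?_
  unfold Hlen
  apply intervalIntegral.integral_mono_on zero_le_one
  · exact ((continuous_const.mul hgc).abs).intervalIntegrable 0 1
  · exact hcont.intervalIntegrable 0 1
  · intro x _
    have h4 : |2 * deriv g x| = Real.sqrt (4 * (deriv g x) ^ 2) := by
      rw [show 4 * (deriv g x) ^ 2 = (2 * deriv g x) ^ 2 by ring, Real.sqrt_sq_eq_abs]
    rw [h4]
    apply Real.sqrt_le_sqrt
    have : 0 ≤ ((γ x).2) ^ 6 * (deriv f x) ^ 2 := by positivity
    linarith


lemma vertical_path (θ₀ ξ₀ ξ₁ : ℝ) (h₀ : 0 < ξ₀) (h₁ : 0 < ξ₁) :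
    ∃ γ : ℝ → ℝ × ℝ, ContDiff ℝ 1 γ ∧ γ 0 = (θ₀, ξ₀) ∧ γ 1 = (θ₀, ξ₁) ∧
      (∀ t ∈ Set.Icc (0:ℝ) 1, 0 < (γ t).2) ∧ Hlen γ 0 1 = 2 * |ξ₁ - ξ₀| := by
  refine ⟨fun t => (θ₀, ξ₀ + t * (ξ₁ - ξ₀)), ?_, by norm_num, by norm_num, ?_, ?_⟩
  · exact contDiff_const.prodMk (contDiff_const.add (contDiff_id.mul contDiff_const))
  · rintro t ⟨ht0, ht1⟩
    simp only
    nlinarith [mul_nonneg ht0 h₁.le, mul_nonneg (sub_nonneg.mpr ht1) h₀.le]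
  · have hd2 : ∀ x : ℝ, deriv (fun t : ℝ => ξ₀ + t * (ξ₁ - ξ₀)) x = ξ₁ - ξ₀ := by
      intro x
      have : HasDerivAt (fun t : ℝ => ξ₀ + t * (ξ₁ - ξ₀)) (1 * (ξ₁ - ξ₀)) x :=
        ((hasDerivAt_id x).mul_const (ξ₁ - ξ₀)).const_add ξ₀
      simpa using this.deriv
    unfold Hlen
    have : ∀ x : ℝ, Real.sqrt (4 * (deriv (fun t : ℝ => ξ₀ + t * (ξ₁ - ξ₀)) x) ^ 2 +
        (ξ₀ + x * (ξ₁ - ξ₀)) ^ 6 * (deriv (fun _ : ℝ => θ₀) x) ^ 2) = 2 * |ξ₁ - ξ₀| := by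
      intro x
      rw [hd2, deriv_const]
      rw [show (4 : ℝ) * (ξ₁ - ξ₀) ^ 2 + (ξ₀ + x * (ξ₁ - ξ₀)) ^ 6 * 0 ^ 2
        = (2 * |ξ₁ - ξ₀|) ^ 2 by rw [mul_pow, sq_abs]; ring]
      exact Real.sqrt_sq (by positivity)
    simp only [this]
    simp


lemma aux_int (a b C : ℝ) (ha : 0 ≤ a) (hb : 0 ≤ b) (hC : 0 ≤ C) (N : ℕ) (hN1 : 1 ≤ N) :
    ∫ x in (0:ℝ)..1,
      Real.sqrt (4 * ((N:ℝ) * b * x ^ (N-1) - (N:ℝ) * a * (1-x) ^ (N-1)) ^ 2 + C ^ 2)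
      ≤ 2 * (a + b) + C := by
  have hN0 : N ≠ 0 := by omega
  set D : ℝ → ℝ := fun x => (N:ℝ) * b * x ^ (N-1) - (N:ℝ) * a * (1-x) ^ (N-1) with hDdef
  have hDc : Continuous D := by
    apply Continuous.sub
    · exact continuous_const.mul (continuous_id.pow _)
    · exact continuous_const.mul ((continuous_const.sub continuous_id).pow _)
  set h : ℝ → ℝ := fun x =>
    2 * ((N:ℝ) * a * (1 - x) ^ (N - 1) + (N:ℝ) * b * x ^ (N - 1)) + C with hhdef
  have hhc : Continuous h := by
    apply Continuous.add _ continuous_const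
    apply Continuous.mul continuous_const
    apply Continuous.add
    · exact continuous_const.mul ((continuous_const.sub continuous_id).pow _)
    · exact continuous_const.mul (continuous_id.pow _)
  have hmono : ∫ x in (0:ℝ)..1, Real.sqrt (4 * (D x) ^ 2 + C ^ 2) ≤ ∫ x in (0:ℝ)..1, h x := by
    apply intervalIntegral.integral_mono_on zero_le_one
    · exact (((continuous_const.mul (hDc.pow 2)).add continuous_const).sqrt).intervalIntegrable 0 1
    · exact hhc.intervalIntegrable 0 1
    · intro x hx
      obtain ⟨hx0, hx1⟩ := hx
      have hP : 0 ≤ (N:ℝ) * a * (1 - x) ^ (N - 1) :=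
        mul_nonneg (mul_nonneg (by positivity) ha) (pow_nonneg (by linarith) _)
      have hQ : 0 ≤ (N:ℝ) * b * x ^ (N - 1) :=
        mul_nonneg (mul_nonneg (by positivity) hb) (pow_nonneg (by linarith) _)
      have hDabs : |D x| ≤ (N:ℝ) * a * (1 - x) ^ (N - 1) + (N:ℝ) * b * x ^ (N - 1) := by
        rw [abs_le]
        constructor
        · simp only [hDdef]; linarith
        · simp only [hDdef]; linarith
      have hsq : 4 * (D x) ^ 2 + C ^ 2 ≤ (2 * |D x| + C) ^ 2 := by
        nlinarith [sq_abs (D x), abs_nonneg (D x), mul_nonneg (abs_nonneg (D x)) hC]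
      have hle := Real.sqrt_le_sqrt hsq
      rw [Real.sqrt_sq (by positivity)] at hle
      simp only [hhdef]
      linarith
  have hint : ∫ x in (0:ℝ)..1, h x = 2 * (a + b) + C := by
    have hHd : ∀ x ∈ uIcc (0:ℝ) 1,
        HasDerivAt (fun x => 2 * (-(a * (1 - x) ^ N) + b * x ^ N) + C * x) (h x) x := by
      intro x _
      have h1 : HasDerivAt (fun t : ℝ => (1 - t) ^ N) ((N:ℝ) * (1 - x) ^ (N - 1) * (-1)) x :=
        ((hasDerivAt_id x).const_sub 1).pow N
      have h2 : HasDerivAt (fun t : ℝ => t ^ N) ((N:ℝ) * x ^ (N - 1)) x := by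
        simpa using hasDerivAt_pow N x
      have h3 := (((h1.const_mul a).neg.add (h2.const_mul b)).const_mul 2).add
        ((hasDerivAt_id x).const_mul C)
      refine HasDerivAt.congr_deriv h3 ?_
      simp only [hhdef]; ring
    rw [intervalIntegral.integral_eq_sub_of_hasDerivAt hHd (hhc.intervalIntegrable 0 1)]
    norm_num [zero_pow hN0]
    try ring
  calc ∫ x in (0:ℝ)..1, Real.sqrt (4 * (D x) ^ 2 + C ^ 2) ≤ ∫ x in (0:ℝ)..1, h x := hmono
    _ = 2 * (a + b) + C := hint

lemma key_path (θ₀ ξ₀ θ₁ ξ₁ : ℝ) (h₀ : 0 < ξ₀) (h₁ : 0 < ξ₁) (hθ : θ₀ ≠ θ₁) :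
    ∃ γ : ℝ → ℝ × ℝ, ContDiff ℝ 1 γ ∧ γ 0 = (θ₀, ξ₀) ∧ γ 1 = (θ₁, ξ₁) ∧
      (∀ t ∈ Set.Icc (0:ℝ) 1, 0 < (γ t).2) ∧ Hlen γ 0 1 < 2 * ξ₀ + 2 * ξ₁ := by
  obtain ⟨Δ, hΔeq, hΔ⟩ : ∃ Δ : ℝ, Δ = |θ₁ - θ₀| ∧ 0 < Δ :=
    ⟨|θ₁ - θ₀|, rfl, abs_pos.mpr (sub_ne_zero.mpr (Ne.symm hθ))⟩
  obtain ⟨m, hm0, hmξ₀, hmξ₁, hm2⟩ :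
      ∃ m : ℝ, 0 < m ∧ m ≤ ξ₀ / 2 ∧ m ≤ ξ₁ / 2 ∧ 16 * Δ * m ^ 2 ≤ 1 := by
    have hsΔ : 0 < Real.sqrt Δ := Real.sqrt_pos.mpr hΔ
    refine ⟨min (min ξ₀ ξ₁ / 2) (1 / (4 * Real.sqrt Δ)), lt_min (by positivity) (by positivity),
      ?_, ?_, ?_⟩
    · exact le_trans (min_le_left _ _) (by have := min_le_left ξ₀ ξ₁; linarith)
    · exact le_trans (min_le_left _ _) (by have := min_le_right ξ₀ ξ₁; linarith)
    · have h1 : min (min ξ₀ ξ₁ / 2) (1 / (4 * Real.sqrt Δ)) ≤ 1 / (4 * Real.sqrt Δ) :=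
        min_le_right _ _
      have h0 : (0:ℝ) ≤ min (min ξ₀ ξ₁ / 2) (1 / (4 * Real.sqrt Δ)) :=
        le_min (by positivity) (by positivity)
      have h2 := pow_le_pow_left₀ h0 h1 2
      have h3 : (1 / (4 * Real.sqrt Δ)) ^ 2 = 1 / (16 * Δ) := by
        rw [div_pow, mul_pow, Real.sq_sqrt hΔ.le]; norm_num
      rw [h3] at h2
      calc 16 * Δ * min (min ξ₀ ξ₁ / 2) (1 / (4 * Real.sqrt Δ)) ^ 2
          ≤ 16 * Δ * (1 / (16 * Δ)) := mul_le_mul_of_nonneg_left h2 (by positivity)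
        _ = 1 := by field_simp
  obtain ⟨a, ha, haeq⟩ : ∃ a : ℝ, 0 ≤ a ∧ a = ξ₀ - m := ⟨ξ₀ - m, by linarith, rfl⟩
  obtain ⟨b, hb, hbeq⟩ : ∃ b : ℝ, 0 ≤ b ∧ b = ξ₁ - m := ⟨ξ₁ - m, by linarith, rfl⟩
  obtain ⟨N, hNe, hN0, hN1, hNm⟩ :
      ∃ N : ℕ, Even N ∧ N ≠ 0 ∧ 1 ≤ N ∧ (a + b) * ((3:ℝ)/4) ^ N ≤ m := by
    obtain ⟨n, hn⟩ := exists_pow_lt_of_lt_one (show (0:ℝ) < m / (a + b + 1) by positivity)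
      (show (3:ℝ)/4 < 1 by norm_num)
    refine ⟨2 * n + 2, ⟨n + 1, by omega⟩, by omega, by omega, ?_⟩
    have h34 : ((3:ℝ)/4) ^ (2 * n + 2) ≤ (3/4) ^ n :=
      pow_le_pow_of_le_one (by norm_num) (by norm_num) (by omega)
    have hab1 : (0:ℝ) < a + b + 1 := by linarith
    calc (a + b) * ((3:ℝ)/4) ^ (2 * n + 2) ≤ (a + b) * (m / (a + b + 1)) :=
          mul_le_mul_of_nonneg_left (h34.trans hn.le) (by linarith)
      _ ≤ m := by rw [mul_div_assoc', div_le_iff₀ hab1]; nlinarith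
  set ξf : ℝ → ℝ := fun t => m + a * (1 - t) ^ N + b * t ^ N with hξdef
  have hξpos : ∀ t, 0 < ξf t := by
    intro t
    have e1 : 0 ≤ (1 - t) ^ N := hNe.pow_nonneg _
    have e2 : 0 ≤ t ^ N := hNe.pow_nonneg _
    have := mul_nonneg ha e1
    have := mul_nonneg hb e2
    simp only [hξdef]; linarith
  have hξC1 : ContDiff ℝ 1 ξf := by
    apply ContDiff.add
    apply ContDiff.add contDiff_const
    · exact contDiff_const.mul ((contDiff_const.sub contDiff_id).pow N)
    · exact contDiff_const.mul (contDiff_id.pow N)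
  have hD : ∀ t : ℝ, HasDerivAt ξf ((N:ℝ) * b * t ^ (N - 1) - (N:ℝ) * a * (1 - t) ^ (N - 1)) t := by
    intro t
    have h1 : HasDerivAt (fun t : ℝ => (1 - t) ^ N) ((N:ℝ) * (1 - t) ^ (N - 1) * (-1)) t :=
      ((hasDerivAt_id t).const_sub 1).pow N
    have h2 : HasDerivAt (fun t : ℝ => t ^ N) ((N:ℝ) * t ^ (N - 1)) t := by
      simpa using hasDerivAt_pow N t
    have h3 := ((h1.const_mul a).const_add m).add (h2.const_mul b)
    refine HasDerivAt.congr_deriv h3 ?_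
    ring
  set g : ℝ → ℝ := fun s => ((ξf s) ^ 3)⁻¹ with hgdef
  have hgc : Continuous g :=
    Continuous.inv₀ (hξC1.continuous.pow 3) (fun s => pow_ne_zero 3 (hξpos s).ne')
  have hgpos : ∀ s, 0 < g s := fun s => inv_pos.mpr (pow_pos (hξpos s) 3)
  set F : ℝ → ℝ := fun t => ∫ s in (0:ℝ)..t, g s with hFdef
  have hF : ∀ t, HasDerivAt F (g t) t := fun t => (hgc.integral_hasStrictDerivAt 0 t).hasDerivAt
  obtain ⟨I, hIeq⟩ : ∃ I : ℝ, I = F 1 := ⟨F 1, rfl⟩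
  have hI : 1 / (16 * m ^ 3) ≤ I := by
    have e1 : (∫ s in (0:ℝ)..(1/4), g s) + (∫ s in (1/4:ℝ)..1, g s) = ∫ s in (0:ℝ)..1, g s :=
      intervalIntegral.integral_add_adjacent_intervals
        (hgc.intervalIntegrable 0 (1/4)) (hgc.intervalIntegrable (1/4) 1)
    have e2 : (∫ s in (1/4:ℝ)..(3/4), g s) + (∫ s in (3/4:ℝ)..1, g s) = ∫ s in (1/4:ℝ)..1, g s :=
      intervalIntegral.integral_add_adjacent_intervals
        (hgc.intervalIntegrable (1/4) (3/4)) (hgc.intervalIntegrable (3/4) 1)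
    have p1 : 0 ≤ ∫ s in (0:ℝ)..(1/4), g s :=
      intervalIntegral.integral_nonneg (by norm_num) (fun u _ => (hgpos u).le)
    have p3 : 0 ≤ ∫ s in (3/4:ℝ)..1, g s :=
      intervalIntegral.integral_nonneg (by norm_num) (fun u _ => (hgpos u).le)
    have hmid : 1 / (16 * m ^ 3) ≤ ∫ s in (1/4:ℝ)..(3/4), g s := by
      have hconst : ∫ s in (1/4:ℝ)..(3/4), ((8:ℝ) * m ^ 3)⁻¹ = 1 / (16 * m ^ 3) := by
        rw [intervalIntegral.integral_const, smul_eq_mul]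
        field_simp
        ring
      rw [← hconst]
      apply intervalIntegral.integral_mono_on (by norm_num)
        (intervalIntegrable_const) (hgc.intervalIntegrable _ _)
      intro x hx
      obtain ⟨hx1, hx2⟩ := hx
      have hb1 : ξf x ≤ 2 * m := by
        have e1 : (1 - x) ^ N ≤ (3/4:ℝ) ^ N := pow_le_pow_left₀ (by linarith) (by linarith) N
        have e2 : x ^ N ≤ (3/4:ℝ) ^ N := pow_le_pow_left₀ (by linarith) (by linarith) N
        have e3 : a * (1 - x) ^ N ≤ a * (3/4:ℝ) ^ N := mul_le_mul_of_nonneg_left e1 ha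
        have e4 : b * x ^ N ≤ b * (3/4:ℝ) ^ N := mul_le_mul_of_nonneg_left e2 hb
        have e5 : a * (3/4:ℝ) ^ N + b * (3/4:ℝ) ^ N = (a + b) * (3/4:ℝ) ^ N := by ring
        simp only [hξdef]
        linarith
      have h8 : (ξf x) ^ 3 ≤ (8:ℝ) * m ^ 3 := by
        have := pow_le_pow_left₀ (hξpos x).le hb1 3
        calc (ξf x) ^ 3 ≤ (2 * m) ^ 3 := this
          _ = 8 * m ^ 3 := by ring
      have := inv_anti₀ (show (0:ℝ) < (ξf x) ^ 3 from pow_pos (hξpos x) 3) h8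
      simpa only [hgdef] using this
    rw [hIeq, hFdef]
    simp only []
    linarith
  have hI0 : (0:ℝ) < I := lt_of_lt_of_le (by positivity) hI
  obtain ⟨c, hceq⟩ : ∃ c : ℝ, c = (θ₁ - θ₀) / I := ⟨_, rfl⟩
  have hcm : |c| ≤ m := by
    have h1 : |c| = Δ / I := by rw [hceq, abs_div, abs_of_pos hI0, ← hΔeq]
    have h2 : Δ / I ≤ Δ * (16 * m ^ 3) := by
      rw [div_le_iff₀ hI0]
      have h16 : (0:ℝ) < 16 * m ^ 3 := by positivity
      have hh : 1 ≤ (16 * m ^ 3) * I := by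
        have := mul_le_mul_of_nonneg_left hI h16.le
        rw [mul_one_div, div_self h16.ne'] at this
        linarith
      nlinarith
    have h3 : Δ * (16 * m ^ 3) ≤ m := by nlinarith
    rw [h1]; linarith
  set θf : ℝ → ℝ := fun t => θ₀ + c * F t with hθfdef
  have hθd : ∀ t, HasDerivAt θf (c * g t) t := fun t => ((hF t).const_mul c).const_add θ₀
  have hθC1 : ContDiff ℝ 1 θf := by
    rw [contDiff_one_iff_deriv]
    refine ⟨fun t => (hθd t).differentiableAt, ?_⟩
    have : deriv θf = fun t => c * g t := funext fun t => (hθd t).deriv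
    rw [this]; exact continuous_const.mul hgc
  refine ⟨fun t => (θf t, ξf t), hθC1.prodMk hξC1, ?_, ?_, ?_, ?_⟩
  · have hF0 : F 0 = 0 := intervalIntegral.integral_same
    have hξ0 : ξf 0 = ξ₀ := by
      simp only [hξdef]
      norm_num [zero_pow hN0]
      linarith [haeq]
    show (θf 0, ξf 0) = (θ₀, ξ₀)
    rw [hξ0]
    simp only [hθfdef, hF0, mul_zero, add_zero]
  · have hξ1 : ξf 1 = ξ₁ := by
      simp only [hξdef]
      norm_num [zero_pow hN0]
      linarith [hbeq]
    have hθ1 : θf 1 = θ₁ := by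
      simp only [hθfdef, ← hIeq, hceq]
      rw [div_mul_cancel₀ _ hI0.ne']
      ring
    show (θf 1, ξf 1) = (θ₁, ξ₁)
    rw [hθ1, hξ1]
  · exact fun t _ => hξpos t
  · have hder2 : (fun x => Real.sqrt (4 * (deriv (fun t => ((fun t => (θf t, ξf t)) t).2) x) ^ 2 +
        (((fun t => (θf t, ξf t)) x).2) ^ 6 * (deriv (fun t => ((fun t => (θf t, ξf t)) t).1) x) ^ 2))
        = fun x => Real.sqrt (4 * ((N:ℝ) * b * x ^ (N-1) - (N:ℝ) * a * (1-x) ^ (N-1)) ^ 2 + |c| ^ 2) := by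
      funext x
      have e1 : deriv (fun t => ((fun t => (θf t, ξf t)) t).2) x
          = (N:ℝ) * b * x ^ (N-1) - (N:ℝ) * a * (1-x) ^ (N-1) := (hD x).deriv
      have e2 : deriv (fun t => ((fun t => (θf t, ξf t)) t).1) x = c * g x := (hθd x).deriv
      rw [e1, e2]
      have hne : ((ξf x) ^ 3) ≠ 0 := pow_ne_zero 3 (hξpos x).ne'
      have hkey : ((fun t => (θf t, ξf t)) x).2 ^ 6 * (c * g x) ^ 2 = |c| ^ 2 := by
        show (ξf x) ^ 6 * (c * ((ξf x) ^ 3)⁻¹) ^ 2 = |c| ^ 2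
        rw [sq_abs, mul_pow, inv_pow, show (ξf x) ^ 6 = ((ξf x) ^ 3) ^ 2 by rw [← pow_mul],
          mul_comm (c ^ 2), ← mul_assoc, mul_inv_cancel₀ (pow_ne_zero 2 hne), one_mul]
      rw [hkey]
    unfold Hlen
    rw [hder2]
    have hbnd := aux_int a b (|c|) ha hb (abs_nonneg c) N hN1
    have hfin : 2 * (a + b) + |c| < 2 * ξ₀ + 2 * ξ₁ := by
      rw [haeq, hbeq]; linarith
    exact lt_of_le_of_lt hbnd hfin


/-- If `θ₀ ≠ θ₁` the distance is strictly less than `2ξ₀ + 2ξ₁`;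
if `θ₀ = θ₁` it equals `2|ξ₁ - ξ₀|`. -/
theorem stmt2 (θ₀ ξ₀ θ₁ ξ₁ : ℝ) (h₀ : 0 < ξ₀) (h₁ : 0 < ξ₁) :
    (θ₀ ≠ θ₁ → Hdist (θ₀, ξ₀) (θ₁, ξ₁) < 2 * ξ₀ + 2 * ξ₁) ∧
    (θ₀ = θ₁ → Hdist (θ₀, ξ₀) (θ₁, ξ₁) = 2 * |ξ₁ - ξ₀|) := by
  have hbdd : ∀ p q : ℝ × ℝ, BddBelow { L : ℝ | ∃ γ : ℝ → ℝ × ℝ, ContDiff ℝ 1 γ ∧ γ 0 = p ∧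
      γ 1 = q ∧ (∀ t ∈ Set.Icc (0:ℝ) 1, 0 < (γ t).2) ∧ L = Hlen γ 0 1 } := by
    intro p q
    refine ⟨0, fun L hL => ?_⟩
    obtain ⟨γ, _, _, _, _, hLe⟩ := hL
    rw [hLe]
    exact hlen_nonneg γ
  constructor
  · intro hne
    obtain ⟨γ, hC, hg0, hg1, hpos, hlt⟩ := key_path θ₀ ξ₀ θ₁ ξ₁ h₀ h₁ hne
    have hmem : Hlen γ 0 1 ∈ { L : ℝ | ∃ γ : ℝ → ℝ × ℝ, ContDiff ℝ 1 γ ∧ γ 0 = (θ₀, ξ₀) ∧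
        γ 1 = (θ₁, ξ₁) ∧ (∀ t ∈ Set.Icc (0:ℝ) 1, 0 < (γ t).2) ∧ L = Hlen γ 0 1 } :=
      ⟨γ, hC, hg0, hg1, hpos, rfl⟩
    exact lt_of_le_of_lt (csInf_le (hbdd _ _) hmem) hlt
  · intro heq
    subst heq
    obtain ⟨γ, hC, hg0, hg1, hpos, hlen⟩ := vertical_path θ₀ ξ₀ ξ₁ h₀ h₁
    have hmem : (2 * |ξ₁ - ξ₀|) ∈ { L : ℝ | ∃ γ : ℝ → ℝ × ℝ, ContDiff ℝ 1 γ ∧ γ 0 = (θ₀, ξ₀) ∧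
        γ 1 = (θ₀, ξ₁) ∧ (∀ t ∈ Set.Icc (0:ℝ) 1, 0 < (γ t).2) ∧ L = Hlen γ 0 1 } :=
      ⟨γ, hC, hg0, hg1, hpos, hlen.symm⟩
    apply le_antisymm
    · exact csInf_le (hbdd _ _) hmem
    · apply le_csInf ⟨_, hmem⟩
      rintro L ⟨δ, hδC, hδ0, hδ1, _, rfl⟩
      have hlow := hlen_lower δ hδC
      have e : (δ 1).2 - (δ 0).2 = ξ₁ - ξ₀ := by rw [hδ0, hδ1]
      rw [e] at hlow
      exact hlow
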